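/- Let ε ≤ 1/3, let G admit an (ε,η)-almost-clique decomposition V = V_sparse ∪ C_1 ∪ ... ∪ C_k, and let v ∈ C_i. Then the local sparsity of v satisfies ζ_v ≥ (1−2ε)·e(v), where e(v) = |N(v) ∩ ⋃_{j≠i} C_j| is the external degree of v. -/

import Mathlib

open Finset

variable {V : Type*} [Fintype V] [DecidableEq V]

/-- Nodes `u, v` are `ε`-similar if `|N(u) ∩ N(v)| ≥ (1−ε)Δ`, where `Δ` is the
maximum degree of `G`. -/
abbrev SimilarNodes (G : SimpleGraph V) [DecidableRel G.Adj] (ε : ℝ) (u v : V) : Prop :=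
  (1 - ε) * (G.maxDegree : ℝ) ≤ ((G.neighborFinset u ∩ G.neighborFinset v).card : ℝ)

/-- Nodes `u, v` are `ε`-friends if they are `ε`-similar and adjacent. -/
abbrev Friends (G : SimpleGraph V) [DecidableRel G.Adj] (ε : ℝ) (u v : V) : Prop :=
  SimilarNodes G ε u v ∧ G.Adj u v

/-- A node is `ε`-dense if it has at least `(1−ε)Δ` `ε`-friends. -/
def IsDense (G : SimpleGraph V) [DecidableRel G.Adj] (ε : ℝ) (v : V) : Prop :=
  (1 - ε) * (G.maxDegree : ℝ) ≤ ((univ.filter (fun w => Friends G ε v w)).card : ℝ)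

/-- An `(ε,η)`-almost-clique decomposition of `G`: a partition
`V = V_sparse ∪ C 0 ∪ ... ∪ C (k-1)` such that `V_sparse` contains no `η`-dense node,
`(1−ε)Δ ≤ |C i| ≤ (1+ε)Δ`, and every `v ∈ C i` has at least `(1−ε)Δ` neighbors in `C i`. -/
structure IsACD (G : SimpleGraph V) [DecidableRel G.Adj] (ε η : ℝ) {k : ℕ}
    (Vsp : Finset V) (C : Fin k → Finset V) : Prop where
  cover : ∀ v : V, v ∈ Vsp ∨ ∃ i, v ∈ C i
  disjoint_sparse : ∀ i, Disjoint Vsp (C i)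
  disjoint_cliques : ∀ i j, i ≠ j → Disjoint (C i) (C j)
  sparse_not_dense : ∀ v ∈ Vsp, ¬ IsDense G η v
  card_lower : ∀ i, (1 - ε) * (G.maxDegree : ℝ) ≤ ((C i).card : ℝ)
  card_upper : ∀ i, ((C i).card : ℝ) ≤ (1 + ε) * (G.maxDegree : ℝ)
  nbr_lower : ∀ i, ∀ v ∈ C i, (1 - ε) * (G.maxDegree : ℝ) ≤ ((G.neighborFinset v ∩ C i).card : ℝ)

/-- `m(X)`: the number of edges of `G` with both endpoints in `X`
(ordered adjacent pairs, halved). -/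
def edgesIn (G : SimpleGraph V) [DecidableRel G.Adj] (X : Finset V) : ℕ :=
  ((X ×ˢ X).filter (fun p : V × V => G.Adj p.1 p.2)).card / 2

/-- The local sparsity `ζ_v = (1/Δ)·(Δ(Δ−1)/2 − m(N(v)))`. -/
noncomputable def sparsity (G : SimpleGraph V) [DecidableRel G.Adj] (v : V) : ℝ :=
  (1 / (G.maxDegree : ℝ)) *
    ((G.maxDegree : ℝ) * ((G.maxDegree : ℝ) - 1) / 2 - (edgesIn G (G.neighborFinset v) : ℝ))

/-- If `ε ≤ 1/3` and `v ∈ C i` in an `(ε,η)`-ACD, then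
`ζ_v ≥ (1−2ε)·e(v)` where `e(v) = |N(v) ∩ ⋃_{j≠i} C j|` is the external degree of `v`. -/
theorem stmt8 (G : SimpleGraph V) [DecidableRel G.Adj] (ε η : ℝ)
    (hε0 : 0 < ε) (hε : ε ≤ 1 / 3) (hη : η ∈ Set.Ioo (0 : ℝ) 1)
    {k : ℕ} (Vsp : Finset V) (C : Fin k → Finset V) (hACD : IsACD G ε η Vsp C)
    (i : Fin k) (v : V) (hv : v ∈ C i) :
    (1 - 2 * ε) * (((G.neighborFinset v).filter (fun w => ∃ j, j ≠ i ∧ w ∈ C j)).card : ℝ) ≤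
      sparsity G v := by
  classical
  set Δ : ℕ := G.maxDegree with hΔdef
  by_cases hΔ0 : Δ = 0
  · -- degenerate case: no edges
    have hdeg : (G.neighborFinset v).card = 0 := by
      have h := G.degree_le_maxDegree v
      simp only [SimpleGraph.degree] at h
      omega
    have hNempty : G.neighborFinset v = ∅ := Finset.card_eq_zero.mp hdeg
    have hE0 : ((G.neighborFinset v).filter (fun w => ∃ j, j ≠ i ∧ w ∈ C j)).card = 0 := by
      rw [hNempty]; simp
    rw [hE0]
    have : sparsity G v = 0 := by
      unfold sparsity
      rw [← hΔdef, hΔ0]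
      simp
    rw [this]
    simp
  have hΔpos : 0 < Δ := Nat.pos_of_ne_zero hΔ0
  have hΔRpos : (0 : ℝ) < (Δ : ℝ) := by exact_mod_cast hΔpos
  set N : Finset V := G.neighborFinset v with hNdef
  set E : Finset V := N.filter (fun w => ∃ j, j ≠ i ∧ w ∈ C j) with hEdef
  set S : V → Finset V := fun u => (N ∩ C i).filter (fun w => ¬ G.Adj u w) with hSdef
  set Q1 : Finset (V × V) := E.biUnion (fun u => {u} ×ˢ S u) with hQ1def
  set Q2 : Finset (V × V) := Q1.image Prod.swap with hQ2def
  set P : Finset (V × V) := (N ×ˢ N).filter (fun p : V × V => G.Adj p.1 p.2) with hPdef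
  -- membership characterizations
  have hmemQ1 : ∀ p : V × V, p ∈ Q1 ↔ p.1 ∈ E ∧ p.2 ∈ S p.1 := by
    intro p
    simp only [hQ1def, Finset.mem_biUnion, Finset.mem_product, Finset.mem_singleton]
    constructor
    · rintro ⟨u, hu, rfl, h2⟩; exact ⟨hu, h2⟩
    · rintro ⟨h1, h2⟩; exact ⟨p.1, h1, rfl, h2⟩
  have hEnotCi : ∀ u ∈ E, u ∉ C i := by
    intro u hu
    obtain ⟨-, j, hj, huj⟩ := Finset.mem_filter.mp hu
    exact fun hci => (Finset.disjoint_left.mp (hACD.disjoint_cliques j i hj)) huj hci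
  have hSsub : ∀ u, S u ⊆ N ∩ C i := fun u => Finset.filter_subset _ _
  -- Q1 ⊆ offDiag
  have hQ1sub : Q1 ⊆ N.offDiag := by
    intro p hp
    obtain ⟨h1, h2⟩ := (hmemQ1 p).mp hp
    have hp2 : p.2 ∈ N ∩ C i := hSsub _ h2
    refine Finset.mem_offDiag.mpr ⟨Finset.mem_of_mem_filter _ h1, (Finset.mem_inter.mp hp2).1, ?_⟩
    intro hEq
    exact hEnotCi _ h1 (hEq ▸ (Finset.mem_inter.mp hp2).2)
  have hmemQ2 : ∀ p : V × V, p ∈ Q2 ↔ p.2 ∈ E ∧ p.1 ∈ S p.2 := by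
    intro p
    simp only [hQ2def, Finset.mem_image]
    constructor
    · rintro ⟨q, hq, rfl⟩
      obtain ⟨h1, h2⟩ := (hmemQ1 q).mp hq
      exact ⟨h1, h2⟩
    · rintro ⟨h1, h2⟩
      exact ⟨p.swap, (hmemQ1 p.swap).mpr ⟨h1, h2⟩, Prod.swap_swap p⟩
  have hQ2sub : Q2 ⊆ N.offDiag := by
    intro p hp
    obtain ⟨h1, h2⟩ := (hmemQ2 p).mp hp
    have hp1 : p.1 ∈ N ∩ C i := hSsub _ h2
    refine Finset.mem_offDiag.mpr ⟨(Finset.mem_inter.mp hp1).1, Finset.mem_of_mem_filter _ h1, ?_⟩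
    intro hEq
    exact hEnotCi _ h1 (hEq ▸ (Finset.mem_inter.mp hp1).2)
  have hPsub : P ⊆ N.offDiag := by
    intro p hp
    obtain ⟨hmem, hadj⟩ := Finset.mem_filter.mp hp
    obtain ⟨h1, h2⟩ := Finset.mem_product.mp hmem
    exact Finset.mem_offDiag.mpr ⟨h1, h2, hadj.ne⟩
  have hdisj12 : Disjoint Q1 Q2 := by
    rw [Finset.disjoint_left]
    intro p hp1 hp2
    have h1 := (hmemQ1 p).mp hp1
    have h2 := (hmemQ2 p).mp hp2
    exact hEnotCi _ h1.1 (Finset.mem_inter.mp (hSsub _ h2.2)).2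
  have hdisjP1 : Disjoint P Q1 := by
    rw [Finset.disjoint_left]
    intro p hpP hpQ
    have hadj := (Finset.mem_filter.mp hpP).2
    have h2 := ((hmemQ1 p).mp hpQ).2
    exact (Finset.mem_filter.mp h2).2 hadj
  have hdisjP2 : Disjoint P Q2 := by
    rw [Finset.disjoint_left]
    intro p hpP hpQ
    have hadj := (Finset.mem_filter.mp hpP).2
    have h2 := ((hmemQ2 p).mp hpQ).2
    exact (Finset.mem_filter.mp h2).2 hadj.symm
  -- cardinality bound from disjointness
  have hcards : P.card + Q1.card + Q2.card ≤ N.offDiag.card := by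
    have hunion : (P ∪ Q1) ∪ Q2 ⊆ N.offDiag := by
      refine Finset.union_subset (Finset.union_subset hPsub hQ1sub) hQ2sub
    calc P.card + Q1.card + Q2.card
        = ((P ∪ Q1) ∪ Q2).card := by
          rw [Finset.card_union_of_disjoint, Finset.card_union_of_disjoint hdisjP1]
          exact Finset.disjoint_union_left.mpr ⟨hdisjP2, hdisj12⟩
      _ ≤ N.offDiag.card := Finset.card_le_card hunion
  have hQ2card : Q2.card = Q1.card :=
    Finset.card_image_of_injective _ Prod.swap_injective
  -- lower bound on |S u|
  have hScard : ∀ u ∈ E, (1 - 2 * ε) * (Δ : ℝ) ≤ ((S u).card : ℝ) := by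
    intro u hu
    obtain ⟨huN, j, hj, huj⟩ := Finset.mem_filter.mp hu
    have h1 : (1 - ε) * (Δ : ℝ) ≤ ((N ∩ C i).card : ℝ) := hACD.nbr_lower i v hv
    have h2 : (1 - ε) * (Δ : ℝ) ≤ ((G.neighborFinset u ∩ C j).card : ℝ) :=
      hACD.nbr_lower j u huj
    have h3 : (G.neighborFinset u ∩ C i).card + (G.neighborFinset u ∩ C j).card ≤ Δ := by
      have hdisj : Disjoint (G.neighborFinset u ∩ C i) (G.neighborFinset u ∩ C j) :=
        Finset.disjoint_of_subset_left Finset.inter_subset_right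
          (Finset.disjoint_of_subset_right Finset.inter_subset_right
            ((hACD.disjoint_cliques i j (Ne.symm hj))))
      calc (G.neighborFinset u ∩ C i).card + (G.neighborFinset u ∩ C j).card
          = ((G.neighborFinset u ∩ C i) ∪ (G.neighborFinset u ∩ C j)).card :=
            (Finset.card_union_of_disjoint hdisj).symm
        _ ≤ (G.neighborFinset u).card := Finset.card_le_card
            (Finset.union_subset Finset.inter_subset_left Finset.inter_subset_left)
        _ ≤ Δ := G.degree_le_maxDegree u
    have h4 : ((G.neighborFinset u ∩ C i).card : ℝ) ≤ ε * (Δ : ℝ) := by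
      have h3' : ((G.neighborFinset u ∩ C i).card : ℝ)
          + ((G.neighborFinset u ∩ C j).card : ℝ) ≤ (Δ : ℝ) := by exact_mod_cast h3
      linarith
    have h5 : ((N ∩ C i).filter (fun w => G.Adj u w)).card
        ≤ (G.neighborFinset u ∩ C i).card := by
      apply Finset.card_le_card
      intro w hw
      obtain ⟨hw1, hw2⟩ := Finset.mem_filter.mp hw
      exact Finset.mem_inter.mpr
        ⟨(G.mem_neighborFinset u w).mpr hw2, (Finset.mem_inter.mp hw1).2⟩
    have h6 : ((N ∩ C i).filter (fun w => G.Adj u w)).card + (S u).card = (N ∩ C i).card :=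
      Finset.card_filter_add_card_filter_not _
    have h5' : (((N ∩ C i).filter (fun w => G.Adj u w)).card : ℝ)
        ≤ ((G.neighborFinset u ∩ C i).card : ℝ) := by exact_mod_cast h5
    have h6' : (((N ∩ C i).filter (fun w => G.Adj u w)).card : ℝ) + ((S u).card : ℝ)
        = ((N ∩ C i).card : ℝ) := by exact_mod_cast h6
    linarith
  -- Q1 card as a sum, and its lower bound
  have hQ1card : Q1.card = ∑ u ∈ E, (S u).card := by
    rw [hQ1def]
    rw [Finset.card_biUnion]
    · apply Finset.sum_congr rfl
      intro u _
      simp [Finset.card_product]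
    · intro u _ u' _ huu'
      rw [Function.onFun, Finset.disjoint_left]
      intro p hp hp'
      apply huu'
      have e1 : p.1 = u := by
        have := (Finset.mem_product.mp hp).1
        simpa using this
      have e2 : p.1 = u' := by
        have := (Finset.mem_product.mp hp').1
        simpa using this
      rw [← e1, e2]
  have hQ1lower : (E.card : ℝ) * ((1 - 2 * ε) * (Δ : ℝ)) ≤ (Q1.card : ℝ) := by
    rw [hQ1card]
    push_cast
    calc (E.card : ℝ) * ((1 - 2 * ε) * (Δ : ℝ))
        = ∑ _u ∈ E, (1 - 2 * ε) * (Δ : ℝ) := by rw [Finset.sum_const, nsmul_eq_mul]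
      _ ≤ ∑ u ∈ E, ((S u).card : ℝ) := Finset.sum_le_sum (fun u hu => hScard u hu)
  -- offDiag card bound
  have hoffdiag : (N.offDiag.card : ℝ) ≤ (Δ : ℝ) * ((Δ : ℝ) - 1) := by
    have hNcard : N.card ≤ Δ := G.degree_le_maxDegree v
    have h1 : N.offDiag.card = N.card * (N.card - 1) := by
      rw [Finset.offDiag_card, Nat.mul_sub_one]
    have h2 : N.card * (N.card - 1) ≤ Δ * (Δ - 1) :=
      Nat.mul_le_mul hNcard (Nat.sub_le_sub_right hNcard 1)
    have h3 : (N.offDiag.card : ℝ) ≤ ((Δ * (Δ - 1) : ℕ) : ℝ) := by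
      exact_mod_cast h1 ▸ h2
    calc (N.offDiag.card : ℝ) ≤ ((Δ * (Δ - 1) : ℕ) : ℝ) := h3
      _ = (Δ : ℝ) * ((Δ : ℝ) - 1) := by
          push_cast [Nat.cast_sub hΔpos]
          ring
  -- edgesIn bound
  have hedges : 2 * (edgesIn G N : ℝ) ≤ (P.card : ℝ) := by
    have h : 2 * edgesIn G N ≤ P.card := by
      unfold edgesIn
      rw [← hPdef]
      omega
    exact_mod_cast h
  -- assemble
  have hcards' : (P.card : ℝ) + (Q1.card : ℝ) + (Q2.card : ℝ) ≤ (N.offDiag.card : ℝ) := by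
    exact_mod_cast hcards
  have hQ2card' : (Q2.card : ℝ) = (Q1.card : ℝ) := by exact_mod_cast hQ2card
  have hkey : (Q1.card : ℝ) ≤ (Δ : ℝ) * ((Δ : ℝ) - 1) / 2 - (edgesIn G N : ℝ) := by
    linarith
  have hstep : (1 - 2 * ε) * (E.card : ℝ) * (Δ : ℝ)
      ≤ (Δ : ℝ) * ((Δ : ℝ) - 1) / 2 - (edgesIn G N : ℝ) := by
    calc (1 - 2 * ε) * (E.card : ℝ) * (Δ : ℝ)
        = (E.card : ℝ) * ((1 - 2 * ε) * (Δ : ℝ)) := by ring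
      _ ≤ (Q1.card : ℝ) := hQ1lower
      _ ≤ (Δ : ℝ) * ((Δ : ℝ) - 1) / 2 - (edgesIn G N : ℝ) := hkey
  unfold sparsity
  show (1 - 2 * ε) * (E.card : ℝ)
      ≤ (1 / (Δ : ℝ)) * ((Δ : ℝ) * ((Δ : ℝ) - 1) / 2 - (edgesIn G N : ℝ))
  have hmul := mul_le_mul_of_nonneg_left hstep (le_of_lt (one_div_pos.mpr hΔRpos))
  calc (1 - 2 * ε) * (E.card : ℝ)
      = (1 / (Δ : ℝ)) * ((1 - 2 * ε) * (E.card : ℝ) * (Δ : ℝ)) := by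
        field_simp
    _ ≤ (1 / (Δ : ℝ)) * ((Δ : ℝ) * ((Δ : ℝ) - 1) / 2 - (edgesIn G N : ℝ)) := hmul
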